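/- Let k ∈ ℂ \ {0} and let V : (0,∞) → ℂ be measurable. Then (∫₀^∞ ∫₀^∞ |V(x)| |g_k(x,y)|² |V(y)| dx dy)^{1/2} ≤ |k|^{-1} ∫₀^∞ e^{2x(Im k)_−} |V(x)| dx. (The left-hand side is the Hilbert–Schmidt norm of the Birman–Schwinger operator with kernel √V(x) g_k(x,y) √|V(y)|; in particular this operator is Hilbert–Schmidt whenever the right-hand side is finite.) -/

import Mathlib

open MeasureTheory Set ENNReal

/-- The integral kernel of the resolvent `(-Δ - k²)⁻¹` of the Dirichlet Laplacian on the
half-line `(0,∞)`. -/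
noncomputable def halfLineResolventKernel (k : ℂ) (x y : ℝ) : ℂ :=
  (Complex.exp (Complex.I * k * (x + y)) - Complex.exp (Complex.I * k * |x - y|)) /
    (2 * Complex.I * k)

lemma exp_abs_bound (k : ℂ) (t : ℝ) (ht : 0 ≤ t) :
    ‖Complex.exp (Complex.I * k * t)‖ ≤ Real.exp (t * max (-k.im) 0) := by
  rw [Complex.norm_exp]
  apply Real.exp_le_exp.mpr
  have hre : (Complex.I * k * t).re = -k.im * t := by
    simp [Complex.mul_re, Complex.mul_im]
  rw [hre]
  nlinarith [le_max_left (-k.im) 0]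

lemma kernel_bound (k : ℂ) (hk : k ≠ 0) {x y : ℝ} (hx : 0 ≤ x) (hy : 0 ≤ y) :
    ‖halfLineResolventKernel k x y‖ ≤
      ‖k‖⁻¹ * (Real.exp (x * max (-k.im) 0) * Real.exp (y * max (-k.im) 0)) := by
  set m := max (-k.im) 0 with hm
  have hm0 : 0 ≤ m := le_max_right _ _
  have hkpos : 0 < ‖k‖ := norm_pos_iff.mpr hk
  unfold halfLineResolventKernel
  rw [norm_div]
  have hden : ‖2 * Complex.I * k‖ = 2 * ‖k‖ := by
    simp [map_mul]
  rw [hden]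
  have hb1 : ‖Complex.exp (Complex.I * k * ((x : ℂ) + y))‖ ≤
      Real.exp ((x + y) * m) := by
    have := exp_abs_bound k (x + y) (by linarith)
    simpa using this
  have hb2 : ‖Complex.exp (Complex.I * k * (|x - y| : ℝ))‖ ≤
      Real.exp ((x + y) * m) := by
    refine (exp_abs_bound k |x - y| (abs_nonneg _)).trans (Real.exp_le_exp.mpr ?_)
    have habs : |x - y| ≤ x + y := abs_le.mpr ⟨by linarith, by linarith⟩
    nlinarith
  have hnum : ‖Complex.exp (Complex.I * k * ((x : ℂ) + y)) -
      Complex.exp (Complex.I * k * (|x - y| : ℝ))‖ ≤ 2 * Real.exp ((x + y) * m) := by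
    calc _ ≤ ‖Complex.exp (Complex.I * k * ((x : ℂ) + y))‖ +
          ‖Complex.exp (Complex.I * k * (|x - y| : ℝ))‖ :=
        by simpa using norm_sub_le (Complex.exp (Complex.I * k * ((x : ℂ) + y))) (Complex.exp (Complex.I * k * (|x - y| : ℝ)))
      _ ≤ 2 * Real.exp ((x + y) * m) := by linarith
  calc ‖Complex.exp (Complex.I * k * ((x : ℂ) + y)) -
        Complex.exp (Complex.I * k * (|x - y| : ℝ))‖ / (2 * ‖k‖)
      ≤ (2 * Real.exp ((x + y) * m)) / (2 * ‖k‖) := by gcongr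
    _ = ‖k‖⁻¹ * (Real.exp (x * m) * Real.exp (y * m)) := by
        rw [show (x + y) * m = x * m + y * m by ring, Real.exp_add]
        field_simp

/-- The Hilbert–Schmidt bound for the Birman–Schwinger operator on the half-line:
`(∫₀^∞∫₀^∞ |V(x)||g_k(x,y)|²|V(y)| dx dy)^{1/2} ≤ |k|⁻¹ ∫₀^∞ e^{2x(Im k)_-}|V(x)| dx`,
stated with extended-real-valued integrals. -/
theorem hilbertSchmidt_bound_halfline (k : ℂ) (hk : k ≠ 0) (V : ℝ → ℂ)
    (hV : Measurable V) :
    (∫⁻ x in Ioi (0 : ℝ), ∫⁻ y in Ioi (0 : ℝ),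
        ENNReal.ofReal (‖V x‖ *
          ‖halfLineResolventKernel k x y‖ ^ 2 * ‖V y‖))
        ^ ((1 : ℝ) / 2) ≤
      ENNReal.ofReal ‖k‖⁻¹ *
        ∫⁻ x in Ioi (0 : ℝ),
          ENNReal.ofReal (Real.exp (2 * x * max (-k.im) 0) * ‖V x‖) := by
  set m := max (-k.im) 0 with hm
  have hm0 : 0 ≤ m := le_max_right _ _
  have hkpos : 0 < ‖k‖ := norm_pos_iff.mpr hk
  set c : ℝ := ‖k‖⁻¹ with hc
  have hc0 : 0 ≤ c := inv_nonneg.mpr hkpos.le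
  set f : ℝ → ℝ := fun x => Real.exp (2 * x * m) * ‖V x‖ with hf
  have hf0 : ∀ x, 0 ≤ f x := fun x => mul_nonneg (Real.exp_nonneg _) (norm_nonneg _)
  set F : ℝ → ℝ≥0∞ := fun x => ENNReal.ofReal (f x) with hF
  have hfmeas : Measurable f := by
    apply Measurable.mul
    · exact Real.measurable_exp.comp ((measurable_id.const_mul 2).mul_const m)
    · simpa using hV.norm
  have hFmeas : Measurable F := hfmeas.ennreal_ofReal
  set I : ℝ≥0∞ := ∫⁻ x in Ioi (0 : ℝ), F x with hI
  -- pointwise bound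
  have hpt : ∀ x ∈ Ioi (0:ℝ), ∀ y ∈ Ioi (0:ℝ),
      ENNReal.ofReal (‖V x‖ *
        ‖halfLineResolventKernel k x y‖ ^ 2 * ‖V y‖) ≤
      ENNReal.ofReal (c ^ 2) * (F x * F y) := by
    intro x hx y hy
    have hx0 : (0:ℝ) ≤ x := le_of_lt hx
    have hy0 : (0:ℝ) ≤ y := le_of_lt hy
    have hg := kernel_bound k hk hx0 hy0
    have hg2 : ‖halfLineResolventKernel k x y‖ ^ 2 ≤
        c ^ 2 * (Real.exp (2 * x * m) * Real.exp (2 * y * m)) := by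
      have h2 := pow_le_pow_left₀ (norm_nonneg _) hg 2
      calc ‖halfLineResolventKernel k x y‖ ^ 2
          ≤ (c * (Real.exp (x * m) * Real.exp (y * m))) ^ 2 := h2
        _ = c ^ 2 * (Real.exp (2 * x * m) * Real.exp (2 * y * m)) := by
            rw [show (2:ℝ) * x * m = x * m + x * m by ring,
              show (2:ℝ) * y * m = y * m + y * m by ring, Real.exp_add, Real.exp_add]
            ring
    have hreal : ‖V x‖ *
        ‖halfLineResolventKernel k x y‖ ^ 2 * ‖V y‖ ≤
        c ^ 2 * (f x * f y) := by
      have h1 : ‖V x‖ *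
          ‖halfLineResolventKernel k x y‖ ^ 2 * ‖V y‖ ≤
          ‖V x‖ * (c ^ 2 * (Real.exp (2 * x * m) * Real.exp (2 * y * m))) *
            ‖V y‖ := by
        gcongr
      refine h1.trans (le_of_eq ?_)
      simp only [hf]; ring
    calc ENNReal.ofReal (‖V x‖ *
          ‖halfLineResolventKernel k x y‖ ^ 2 * ‖V y‖)
        ≤ ENNReal.ofReal (c ^ 2 * (f x * f y)) := ENNReal.ofReal_le_ofReal hreal
      _ = ENNReal.ofReal (c ^ 2) * (F x * F y) := by
          rw [ENNReal.ofReal_mul (by positivity), ENNReal.ofReal_mul (hf0 x)]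
  have hstep : (∫⁻ x in Ioi (0 : ℝ), ∫⁻ y in Ioi (0 : ℝ),
      ENNReal.ofReal (‖V x‖ *
        ‖halfLineResolventKernel k x y‖ ^ 2 * ‖V y‖)) ≤
      ENNReal.ofReal (c ^ 2) * (I * I) := by
    have h1 : (∫⁻ x in Ioi (0 : ℝ), ∫⁻ y in Ioi (0 : ℝ),
        ENNReal.ofReal (‖V x‖ *
          ‖halfLineResolventKernel k x y‖ ^ 2 * ‖V y‖)) ≤
        ∫⁻ x in Ioi (0 : ℝ), ∫⁻ y in Ioi (0 : ℝ),
          ENNReal.ofReal (c ^ 2) * (F x * F y) := by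
      refine setLIntegral_mono' measurableSet_Ioi fun x hx => ?_
      refine setLIntegral_mono' measurableSet_Ioi fun y hy => hpt x hx y hy
    refine h1.trans (le_of_eq ?_)
    have hinner : ∀ x : ℝ, (∫⁻ y in Ioi (0 : ℝ),
        ENNReal.ofReal (c ^ 2) * (F x * F y)) =
        (ENNReal.ofReal (c ^ 2) * F x) * I := by
      intro x
      simp_rw [← mul_assoc]
      rw [lintegral_const_mul _ hFmeas]
    simp_rw [hinner]
    have : ∀ x : ℝ, ENNReal.ofReal (c ^ 2) * F x * I =
        (ENNReal.ofReal (c ^ 2) * I) * F x := fun x => by ring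
    simp_rw [this]
    rw [lintegral_const_mul _ hFmeas]
    ring
  calc (∫⁻ x in Ioi (0 : ℝ), ∫⁻ y in Ioi (0 : ℝ),
        ENNReal.ofReal (‖V x‖ *
          ‖halfLineResolventKernel k x y‖ ^ 2 * ‖V y‖))
        ^ ((1 : ℝ) / 2)
      ≤ (ENNReal.ofReal (c ^ 2) * (I * I)) ^ ((1 : ℝ) / 2) := by
        exact ENNReal.rpow_le_rpow hstep (by norm_num)
    _ = ENNReal.ofReal c * I := by
        rw [ENNReal.mul_rpow_of_nonneg _ _ (by norm_num : (0:ℝ) ≤ 1/2)]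
        congr 1
        · rw [ENNReal.ofReal_rpow_of_nonneg (by positivity) (by norm_num)]
          congr 1
          rw [← Real.rpow_natCast c 2, ← Real.rpow_mul hc0]
          norm_num
        · rw [← sq, ← ENNReal.rpow_natCast I 2, ← ENNReal.rpow_mul]
          norm_num
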